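/- In the Markov hierarchy setting, if a closed interval B is commensurate with generation n ≥ 2, then there is a unique element of G_{n−2} that properly contains B. -/
import Mathlib


/-- A Markov hierarchy of closed nondegenerate intervals in `[r₁, 1]`, modeling the
basic-interval structure of the induced Manneville–Pomeau map.  A member of
generation `n` is recorded by its pair of endpoints `p = (p.1, p.2)`. -/
structure MarkovHierarchy (r₁ : ℝ) where
  /-- the set of (endpoint pairs of) basic intervals of generation `n` -/
  G : ℕ → Set (ℝ × ℝ)
  nondeg : ∀ n, ∀ p ∈ G n, p.1 < p.2
  sub : ∀ n, ∀ p ∈ G n, Set.Icc p.1 p.2 ⊆ Set.Icc r₁ 1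
  /-- (i) intervals of the same generation have disjoint interiors -/
  disjInt : ∀ n, ∀ p ∈ G n, ∀ q ∈ G n, p ≠ q →
    Set.Ioo p.1 p.2 ∩ Set.Ioo q.1 q.2 = ∅
  /-- basic intervals of distinct generations are nested or have disjoint interiors -/
  nested : ∀ m n, m < n → ∀ p ∈ G m, ∀ q ∈ G n,
    Set.Icc q.1 q.2 ⊆ Set.Icc p.1 p.2 ∨ Set.Ioo p.1 p.2 ∩ Set.Ioo q.1 q.2 = ∅
  /-- (ii) each interval of generation `n+1` is contained in exactly one interval of
  generation `n` -/
  parent : ∀ n, ∀ p ∈ G (n + 1), ∃! q, q ∈ G n ∧ Set.Icc p.1 p.2 ⊆ Set.Icc q.1 q.2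
  /-- (iii) the union of each generation is dense in `[r₁, 1]` -/
  dense_union : ∀ n, Set.Icc r₁ 1 ⊆ closure (⋃ p ∈ G n, Set.Icc p.1 p.2)
  /-- every basic interval has a left-adjacent interval of the same generation -/
  leftAdj : ∀ n, ∀ p ∈ G n, r₁ < p.1 → ∃ q ∈ G n, q.2 = p.1
  /-- every basic interval has a right-adjacent interval of the same generation -/
  rightAdj : ∀ n, ∀ p ∈ G n, p.2 < 1 → ∃ q ∈ G n, q.1 = p.2
  /-- (iv) just to the right of any left endpoint of generation `n` there lie
  infinitely many intervals of each generation `m > n` -/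
  infMany : ∀ n, ∀ p ∈ G n, ∀ ε : ℝ, 0 < ε → ∀ m, n < m →
    {q | q ∈ G m ∧ Set.Icc q.1 q.2 ⊆ Set.Ioo p.1 (p.1 + ε)}.Infinite

/-- The interval `B` is commensurate with generation `n` (`n ≥ 1`): it contains a
member of `Gₙ` but no member of `Gₙ₋₁`. -/
def MarkovHierarchy.cwg {r₁ : ℝ} (H : MarkovHierarchy r₁) (B : Set ℝ) (n : ℕ) : Prop :=
  (∃ p ∈ H.G n, Set.Icc p.1 p.2 ⊆ B) ∧ ¬∃ p ∈ H.G (n - 1), Set.Icc p.1 p.2 ⊆ B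

/-- If a closed interval `B` is commensurate with generation `n ≥ 2`, then there is a
unique element of `G (n-2)` properly containing `B`. -/
theorem stmt_16 (r₁ : ℝ) (hr₁ : r₁ < 1) (H : MarkovHierarchy r₁)
    (a b : ℝ) (ha : r₁ ≤ a) (hab : a < b) (hb : b ≤ 1)
    (n : ℕ) (hn : 2 ≤ n) (hcwg : H.cwg (Set.Icc a b) n) :
    ∃! q, q ∈ H.G (n - 2) ∧ Set.Icc a b ⊂ Set.Icc q.1 q.2 := by
  obtain ⟨k, rfl⟩ : ∃ k, n = k + 2 := ⟨n - 2, by omega⟩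
  have h2 : k + 2 - 2 = k := by omega
  have h1 : k + 2 - 1 = k + 1 := by omega
  rw [h2]
  obtain ⟨⟨p, hpG, hpB⟩, hno⟩ := hcwg
  rw [h1] at hno
  obtain ⟨p', ⟨hp'G, hpp'⟩, _⟩ := H.parent (k + 1) p hpG
  obtain ⟨q, ⟨hqG, hp'q⟩, _⟩ := H.parent k p' hp'G
  have hpq : Set.Icc p.1 p.2 ⊆ Set.Icc q.1 q.2 := hpp'.trans hp'q
  have hp12 : p.1 < p.2 := H.nondeg _ p hpG
  have hap : a ≤ p.1 := (hpB (Set.left_mem_Icc.mpr hp12.le)).1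
  have hpb : p.2 ≤ b := (hpB (Set.right_mem_Icc.mpr hp12.le)).2
  have hq1 : q.1 ≤ p.1 := (hpq (Set.left_mem_Icc.mpr hp12.le)).1
  have hq2 : p.2 ≤ q.2 := (hpq (Set.right_mem_Icc.mpr hp12.le)).2
  have hq1a : q.1 < a := by
    by_contra h
    push_neg at h
    have hq1b : q.1 < b := by linarith
    obtain ⟨r, hrG, hr⟩ := (H.infMany k q hqG (b - q.1) (by linarith) (k + 1)
      (by omega)).nonempty
    refine hno ⟨r, hrG, fun x hx => ?_⟩
    have hx' := hr hx
    exact ⟨by linarith [hx'.1], by linarith [hx'.2]⟩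
  have hbq2 : b ≤ q.2 := by
    by_contra h
    push_neg at h
    obtain ⟨q', hq'G, hq'1⟩ := H.rightAdj k q hqG (by linarith)
    obtain ⟨r, hrG, hr⟩ := (H.infMany k q' hq'G (b - q.2) (by linarith) (k + 1)
      (by omega)).nonempty
    refine hno ⟨r, hrG, fun x hx => ?_⟩
    have hx' := hr hx
    rw [hq'1] at hx'
    exact ⟨by linarith [hx'.1], by linarith [hx'.2]⟩
  refine ⟨q, ⟨hqG, ?_⟩, ?_⟩
  · refine ⟨Set.Icc_subset_Icc hq1a.le hbq2, fun hsup => ?_⟩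
    have := (hsup (Set.left_mem_Icc.mpr (by linarith))).1
    linarith
  · rintro q' ⟨hq'G, hss⟩
    by_contra hne
    have hdisj := H.disjInt k q' hq'G q hqG hne
    set x := (a + b) / 2 with hx
    have hxa : a < x := by simp [hx]; linarith
    have hxb : x < b := by simp [hx]; linarith
    have hq'1 : q'.1 ≤ a := (hss.1 (Set.left_mem_Icc.mpr hab.le)).1
    have hq'2 : b ≤ q'.2 := (hss.1 (Set.right_mem_Icc.mpr hab.le)).2
    have : x ∈ Set.Ioo q'.1 q'.2 ∩ Set.Ioo q.1 q.2 :=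
      ⟨⟨by linarith, by linarith⟩, ⟨by linarith, by linarith⟩⟩
    rw [hdisj] at this
    exact this
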